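/- Let G₀ be a group and {G_ℓ}_{ℓ≥0} a group chain in G₀ which is weakly normal: there exists n ≥ 0 such that G_ℓ ⊆ G_n ⊆ N_{G₀}(G_ℓ) for all ℓ ≥ n, where N_{G₀}(G_ℓ) = {g ∈ G₀ : g G_ℓ g⁻¹ = G_ℓ} is the normalizer of G_ℓ in G₀. Then the kernel K = ⋂_{ℓ≥0} G_ℓ is a normal subgroup of G_n, and the set of conjugates {g K g⁻¹ : g ∈ G₀} has at most [G₀ : G_n] elements; in particular K has only finitely many conjugates in G₀. -/

import Mathlib

/-!
Molino theory for matchbox manifolds (Dyer–Hurder–Lukina), Proposition 5.7: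
the kernel of a weakly normal group chain is normal in `G_n` and has finitely many
conjugates in `G₀` — at most `[G₀ : G_n]` of them.
-/

/-- The conjugate subgroup `g K g⁻¹`. -/
def conjSub {Γ : Type*} [Group Γ] (g : Γ) (K : Subgroup Γ) : Subgroup Γ :=
  K.map (MulAut.conj g).toMonoidHom

lemma mem_conjSub {Γ : Type*} [Group Γ] {g x : Γ} {K : Subgroup Γ} :
    x ∈ conjSub g K ↔ g⁻¹ * x * g ∈ K := by
  constructor
  · rintro ⟨k, hk, rfl⟩
    simpa [mul_assoc] using hk
  · intro h
    exact ⟨g⁻¹ * x * g, h, by simp [mul_assoc]⟩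

lemma conjSub_mul {Γ : Type*} [Group Γ] (g h : Γ) (K : Subgroup Γ) :
    conjSub (g * h) K = conjSub g (conjSub h K) := by
  ext x
  simp [mem_conjSub, mul_assoc]

/-- **Proposition 5.7.** Let `{G_ℓ}_{ℓ ≥ 0}` be a group chain in `G₀` which is weakly
normal: there exists `n` with `G_ℓ ⊆ G_n ⊆ N_{G₀}(G_ℓ)` for all `ℓ ≥ n`.  Then the kernel
`K = ⋂_ℓ G_ℓ` is a normal subgroup of `G_n`, and the set of conjugates
`{g K g⁻¹ : g ∈ G₀}` is finite, with at most `[G₀ : G_n]` elements. -/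
theorem kernel_of_weakly_normal_chain
    {G₀ : Type*} [Group G₀] (Gc : ℕ → Subgroup G₀)
    (hG0 : Gc 0 = ⊤)
    (hdesc : ∀ ℓ, Gc (ℓ + 1) ≤ Gc ℓ)
    (hfi : ∀ ℓ, (Gc ℓ).FiniteIndex)
    (n : ℕ)
    (hwn : ∀ ℓ, n ≤ ℓ → Gc ℓ ≤ Gc n ∧ Gc n ≤ Subgroup.normalizer (Gc ℓ : Set G₀)) :
    (⨅ ℓ : ℕ, Gc ℓ) ≤ Gc n ∧
    ((⨅ ℓ : ℕ, Gc ℓ).subgroupOf (Gc n)).Normal ∧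
    {H : Subgroup G₀ | ∃ g : G₀, H = conjSub g (⨅ ℓ : ℕ, Gc ℓ)}.Finite ∧
    Set.ncard {H : Subgroup G₀ | ∃ g : G₀, H = conjSub g (⨅ ℓ : ℕ, Gc ℓ)} ≤ (Gc n).index := by
  set K := ⨅ ℓ : ℕ, Gc ℓ with hK
  have hanti : ∀ {a b : ℕ}, a ≤ b → Gc b ≤ Gc a := by
    intro a b hab
    induction hab with
    | refl => exact le_rfl
    | step h ih => exact le_trans (hdesc _) ih
  have hKle : ∀ ℓ, K ≤ Gc ℓ := fun ℓ => iInf_le _ ℓ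
  have hKn : K ≤ Gc n := hKle n
  -- conjugation by an element of Gc n fixes each Gc ℓ's membership for K
  have hconj : ∀ h ∈ Gc n, ∀ k ∈ K, h * k * h⁻¹ ∈ K := by
    intro h hh k hk
    rw [hK, Subgroup.mem_iInf]
    intro ℓ
    rcases le_or_gt n ℓ with hl | hl
    · have hnorm := (hwn ℓ hl).2 hh
      rw [Subgroup.mem_normalizer_iff] at hnorm
      exact (hnorm k).1 ((Subgroup.mem_iInf.1 hk) ℓ)
    · exact hanti hl.le (mul_mem (mul_mem hh (hKn hk)) (inv_mem hh))
  have hconjSub : ∀ h ∈ Gc n, conjSub h K = K := by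
    intro h hh
    apply le_antisymm
    · rintro x ⟨k, hk, rfl⟩
      exact hconj h hh k hk
    · intro k hk
      exact mem_conjSub.2 (by simpa [mul_assoc] using hconj h⁻¹ (inv_mem hh) k hk)
  refine ⟨hKn, ?_, ?_⟩
  · constructor
    intro a ha g
    simp only [Subgroup.mem_subgroupOf] at ha ⊢
    exact hconj g.1 g.2 a.1 ha
  · have hfin : Finite (G₀ ⧸ Gc n) := @Subgroup.finite_quotient_of_finiteIndex _ _ _ (hfi n)
    set S := {H : Subgroup G₀ | ∃ g : G₀, H = conjSub g K} with hS
    have hsub : S ⊆ Set.range (fun q : G₀ ⧸ Gc n => conjSub q.out K) := by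
      rintro H ⟨g, rfl⟩
      refine ⟨(g : G₀ ⧸ Gc n), ?_⟩
      have hmem : ((g : G₀ ⧸ Gc n).out)⁻¹ * g ∈ Gc n := by
        rw [← QuotientGroup.eq]
        exact QuotientGroup.out_eq' _
      calc conjSub (g : G₀ ⧸ Gc n).out K
          = conjSub ((g : G₀ ⧸ Gc n).out * (((g : G₀ ⧸ Gc n).out)⁻¹ * g)) K := by
            rw [conjSub_mul, hconjSub _ hmem]
        _ = conjSub g K := by rw [mul_inv_cancel_left]
    have hrange : (Set.range (fun q : G₀ ⧸ Gc n => conjSub q.out K)).Finite :=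
        Set.finite_range _
    refine ⟨hrange.subset hsub, ?_⟩
    calc S.ncard ≤ (Set.range (fun q : G₀ ⧸ Gc n => conjSub q.out K)).ncard :=
          Set.ncard_le_ncard hsub hrange
      _ = ((fun q : G₀ ⧸ Gc n => conjSub q.out K) '' Set.univ).ncard := by
          rw [Set.image_univ]
      _ ≤ Set.ncard (Set.univ : Set (G₀ ⧸ Gc n)) := Set.ncard_image_le Set.finite_univ
      _ = Nat.card (G₀ ⧸ Gc n) := Set.ncard_univ _
      _ = (Gc n).index := rfl
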